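/- Let T be a rooted tree and S a finite set of nodes closed under pairwise LCA. If {u, v} is an edge of the virtual tree of S with u an ancestor of v in T, then u is the closest strict ancestor of v in T that belongs to S; in particular, for each non-minimal-depth node v of S its virtual-tree parent is well defined and unique. -/
import Mathlib


variable {V : Type} [Fintype V] [DecidableEq V]

/-- `u` is an ancestor of `v` in the tree `G` rooted at `root`:
`u` lies on the unique path from `root` to `v`. -/
def isAncestor (G : SimpleGraph V) (root u v : V) : Prop :=
  G.dist root u + G.dist u v = G.dist root v

/-- `w` is the lowest common ancestor of `u` and `v`: a common ancestor such that
every common ancestor of `u` and `v` is an ancestor of `w`. -/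
def isLCA (G : SimpleGraph V) (root u v w : V) : Prop :=
  isAncestor G root w u ∧ isAncestor G root w v ∧
    ∀ x, isAncestor G root x u → isAncestor G root x v → isAncestor G root x w

/-- The virtual (compressed) tree of a set `S` of nodes of the tree `G`:
`u` and `v` are adjacent iff both are in `S` and no other node of `S` lies on
the tree path between them. -/
def virtGraph (G : SimpleGraph V) (S : Finset V) : SimpleGraph V :=
  SimpleGraph.fromRel fun u v =>
    u ∈ S ∧ v ∈ S ∧ ¬ ∃ x ∈ S, x ≠ u ∧ x ≠ v ∧ G.dist u x + G.dist x v = G.dist u v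

open SimpleGraph in
lemma middle_dist {G : SimpleGraph V} (hc : G.Connected) {a b c : V}
    (p : G.Walk a c) (hp : p.length = G.dist a c) (hb : b ∈ p.support) :
    G.dist a b + G.dist b c = G.dist a c := by
  have hspec := p.take_spec hb
  have hlen : (p.takeUntil b hb).length + (p.dropUntil b hb).length = p.length := by
    rw [← SimpleGraph.Walk.length_append, hspec]
  have h1 := SimpleGraph.dist_le (p.takeUntil b hb)
  have h2 := SimpleGraph.dist_le (p.dropUntil b hb)
  have h3 := hc.dist_triangle (u := a) (v := b) (w := c)
  omega

open SimpleGraph in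
lemma anc_order {G : SimpleGraph V} (hG : G.IsTree) (root a b v : V)
    (ha : isAncestor G root a v) (hb : isAncestor G root b v) :
    isAncestor G root a b ∨ isAncestor G root b a := by
  classical
  obtain ⟨p1, hp1⟩ := hG.isConnected.exists_walk_length_eq_dist root a
  obtain ⟨p2, hp2⟩ := hG.isConnected.exists_walk_length_eq_dist a v
  obtain ⟨q1, hq1⟩ := hG.isConnected.exists_walk_length_eq_dist root b
  obtain ⟨q2, hq2⟩ := hG.isConnected.exists_walk_length_eq_dist b v
  have hplen : (p1.append p2).length = G.dist root v := by
    rw [SimpleGraph.Walk.length_append, hp1, hp2]; exact ha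
  have hqlen : (q1.append q2).length = G.dist root v := by
    rw [SimpleGraph.Walk.length_append, hq1, hq2]; exact hb
  have hppath := (p1.append p2).isPath_of_length_eq_dist hplen
  have hqpath := (q1.append q2).isPath_of_length_eq_dist hqlen
  have heq : (⟨p1.append p2, hppath⟩ : G.Path root v) = ⟨q1.append q2, hqpath⟩ :=
    hG.IsAcyclic.path_unique _ _
  have haq : a ∈ (q1.append q2).support := by
    have : a ∈ (p1.append p2).support := by
      rw [SimpleGraph.Walk.mem_support_append_iff]
      exact Or.inl p1.end_mem_support
    rwa [show p1.append p2 = q1.append q2 from congrArg Subtype.val heq] at this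
  rw [SimpleGraph.Walk.mem_support_append_iff] at haq
  rcases haq with h | h
  · left
    exact middle_dist hG.isConnected q1 hq1 h
  · right
    have := middle_dist hG.isConnected q2 hq2 h
    unfold isAncestor at *
    have hcm : G.dist b a = G.dist a b := SimpleGraph.dist_comm
    omega

open SimpleGraph in
lemma closest (G : SimpleGraph V) (hG : G.IsTree) (root : V) (S : Finset V)
    {u v : V} (hu : u ∈ S)
    (hno : ¬ ∃ x ∈ S, x ≠ u ∧ x ≠ v ∧ G.dist u x + G.dist x v = G.dist u v)
    (hanc : isAncestor G root u v) :
    ∀ x ∈ S, x ≠ v → isAncestor G root x v → isAncestor G root x u := by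
  intro x hxS hxv hxa
  rcases anc_order hG root x u v hxa hanc with h | h
  · exact h
  · by_cases hxu : x = u
    · subst hxu
      unfold isAncestor
      rw [SimpleGraph.dist_self]
      omega
    · exfalso
      apply hno
      refine ⟨x, hxS, hxu, hxv, ?_⟩
      unfold isAncestor at *
      omega

open SimpleGraph in
lemma adj_extract {G : SimpleGraph V} {S : Finset V} {u v : V}
    (h : (virtGraph G S).Adj u v) :
    u ∈ S ∧ v ∈ S ∧ u ≠ v ∧
      ¬ ∃ x ∈ S, x ≠ u ∧ x ≠ v ∧ G.dist u x + G.dist x v = G.dist u v := by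
  rw [virtGraph, SimpleGraph.fromRel_adj] at h
  obtain ⟨hne, h | h⟩ := h
  · exact ⟨h.1, h.2.1, hne, h.2.2⟩
  · refine ⟨h.2.1, h.1, hne, ?_⟩
    rintro ⟨x, hxS, hxu, hxv, hd⟩
    refine h.2.2 ⟨x, hxS, hxv, hxu, ?_⟩
    have e1 : G.dist v x = G.dist x v := SimpleGraph.dist_comm
    have e2 : G.dist x u = G.dist u x := SimpleGraph.dist_comm
    have e3 : G.dist v u = G.dist u v := SimpleGraph.dist_comm
    omega

theorem stmt13 (G : SimpleGraph V) (hG : G.IsTree) (root : V)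
    (lca : V → V → V) (hlca : ∀ u v, isLCA G root u v (lca u v))
    (S : Finset V) (hclosed : ∀ u ∈ S, ∀ v ∈ S, lca u v ∈ S)
    (u v : V) (huv : (virtGraph G S).Adj u v) (hanc : isAncestor G root u v) :
    u ∈ S ∧ u ≠ v ∧
      (∀ x ∈ S, x ≠ v → isAncestor G root x v → isAncestor G root x u) ∧
      ∀ u', (virtGraph G S).Adj u' v → isAncestor G root u' v → u' = u := by
  obtain ⟨huS, hvS, hne, hno⟩ := adj_extract huv
  refine ⟨huS, hne, closest G hG root S huS hno hanc, ?_⟩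
  intro u' hadj' hanc'
  obtain ⟨hu'S, _, hne', hno'⟩ := adj_extract hadj'
  have h1 : isAncestor G root u u' := closest G hG root S hu'S hno' hanc' u huS hne hanc
  have h2 : isAncestor G root u' u := closest G hG root S huS hno hanc u' hu'S hne' hanc'
  unfold isAncestor at h1 h2
  have hcm : G.dist u u' = G.dist u' u := SimpleGraph.dist_comm
  have : G.dist u' u = 0 := by omega
  exact (hG.isConnected.dist_eq_zero_iff.mp this)
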